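/- For every nonzero real number a, every nonnegative integer x, and every real number t, the generating function identity Σ_{n=0}^{∞} C_n(x; a)·t^n/n! = e^{t}·(1 − t/a)^{x} holds, the series converging absolutely. -/

import Mathlib

/-- The Charlier polynomial `C_n(x; a) = ₂F₀(-n, -x; —; -1/a)
  = ∑_{k=0}^{n} (n choose k)·x(x-1)⋯(x-k+1)·(-1/a)^k`,
  regarded as a polynomial function of a real variable `x`. -/
noncomputable def charlier (a : ℝ) (n : ℕ) (x : ℝ) : ℝ :=
  ∑ k ∈ Finset.range (n + 1),
    (n.choose k : ℝ) * (∏ j ∈ Finset.range k, (x - (j : ℝ))) * (-1 / a) ^ k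

lemma prod_range_cast_sub (x k : ℕ) :
    ∏ j ∈ Finset.range k, ((x : ℝ) - (j : ℝ)) = (x.descFactorial k : ℝ) := by
  induction k with
  | zero => simp
  | succ k ih =>
    rw [Finset.prod_range_succ, ih, Nat.descFactorial_succ]
    rcases le_or_gt k x with h | h
    · push_cast [h]; ring
    · rw [Nat.descFactorial_eq_zero_iff_lt.2 h]; simp

/-- Generating function for Charlier polynomials: for `a ≠ 0`, a nonnegative integer `x`
and real `t`, `∑_{n=0}^{∞} C_n(x; a)·t^n/n! = e^t·(1 - t/a)^x`, converging absolutely. -/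
theorem charlier_generating_function (a : ℝ) (ha : a ≠ 0) (x : ℕ) (t : ℝ) :
    Summable (fun n : ℕ => |charlier a n (x : ℝ) * t ^ n / (n.factorial : ℝ)|) ∧
    ∑' n : ℕ, charlier a n (x : ℝ) * t ^ n / (n.factorial : ℝ) =
      Real.exp t * (1 - t / a) ^ x := by
  set f : ℕ → ℝ := fun k => (x.choose k : ℝ) * (-t / a) ^ k with hf
  set g : ℕ → ℝ := fun m => t ^ m / (m.factorial : ℝ) with hg
  have hfsupp : ∀ k, k ∉ Finset.range (x + 1) → f k = 0 := by
    intro k hk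
    simp only [Finset.mem_range, not_lt] at hk
    simp [hf, Nat.choose_eq_zero_of_lt hk]
  have hfsum : Summable fun k => ‖f k‖ :=
    summable_of_ne_finset_zero (s := Finset.range (x + 1))
      (fun k hk => by rw [hfsupp k hk, norm_zero])
  have hgsum : Summable fun m => ‖g m‖ := by
    have := Real.summable_pow_div_factorial |t|
    refine this.congr fun m => ?_
    simp [hg, abs_div, abs_pow]
  have hterm : ∀ n : ℕ, charlier a n (x : ℝ) * t ^ n / (n.factorial : ℝ) =
      ∑ kl ∈ Finset.HasAntidiagonal.antidiagonal n, f kl.1 * g kl.2 := by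
    intro n
    rw [Finset.Nat.sum_antidiagonal_eq_sum_range_succ_mk, charlier, Finset.sum_mul,
      Finset.sum_div]
    refine Finset.sum_congr rfl fun k hk => ?_
    have hkn : k ≤ n := Nat.lt_succ_iff.mp (Finset.mem_range.mp hk)
    rw [prod_range_cast_sub, Nat.descFactorial_eq_factorial_mul_choose]
    have hfac : (n.choose k : ℝ) * (k.factorial : ℝ) * ((n - k).factorial : ℝ)
        = (n.factorial : ℝ) := by
      rw [← Nat.cast_mul, ← Nat.cast_mul, Nat.choose_mul_factorial_mul_factorial hkn]
    have htpow : t ^ n = t ^ k * t ^ (n - k) := by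
      rw [← pow_add, Nat.add_sub_cancel' hkn]
    have h1 : (n.factorial : ℝ) ≠ 0 := Nat.cast_ne_zero.mpr n.factorial_ne_zero
    have h2 : ((n - k).factorial : ℝ) ≠ 0 := Nat.cast_ne_zero.mpr (n - k).factorial_ne_zero
    simp only [hf, hg]
    have h3 : (n.choose k : ℝ) ≠ 0 := Nat.cast_ne_zero.mpr (Nat.choose_pos hkn).ne'
    have h4 : (k.factorial : ℝ) ≠ 0 := Nat.cast_ne_zero.mpr k.factorial_ne_zero
    rw [htpow, div_pow, div_pow, neg_pow, neg_pow, ← hfac]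
    push_cast
    field_simp
    ring
  constructor
  · have := summable_norm_sum_mul_antidiagonal_of_summable_norm hfsum hgsum
    refine this.congr fun n => ?_
    rw [← hterm n, Real.norm_eq_abs]
  · have hprod := tsum_mul_tsum_eq_tsum_sum_antidiagonal_of_summable_norm hfsum hgsum
    have hF : ∑' k, f k = (1 - t / a) ^ x := by
      rw [tsum_eq_sum hfsupp]
      have := add_pow (-t / a) (1 : ℝ) x
      simp only [one_pow, mul_one] at this
      rw [sub_eq_add_neg, ← neg_div, add_comm (1:ℝ) (-t/a), this]
      refine Finset.sum_congr rfl fun k _ => by ring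
    have hG : ∑' m, g m = Real.exp t := by
      rw [Real.exp_eq_exp_ℝ, NormedSpace.exp_eq_tsum_div]
    calc ∑' n : ℕ, charlier a n (x : ℝ) * t ^ n / (n.factorial : ℝ)
        = ∑' n : ℕ, ∑ kl ∈ Finset.HasAntidiagonal.antidiagonal n, f kl.1 * g kl.2 := by
          exact tsum_congr hterm
      _ = (∑' k, f k) * ∑' m, g m := hprod.symm
      _ = Real.exp t * (1 - t / a) ^ x := by rw [hF, hG, mul_comm]
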